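/- Let −1/2 < κ < 0 and k₁ > 0, k₂ > 0 be given. Then the origin 0 ∈ ℝ² is small-time stable for the double integrator system ẋ₁ = x₂, ẋ₂ = u with the feedback law u(x₁,x₂) = −k₁ ⌊x₁⌉^{1+2κ} − k₂ ⌊x₂⌉^{(1+2κ)/(1+κ)}. -/

import Mathlib

open Set Filter

/-- Signed power: `⌊x⌉^a = sign(x) * |x|^a`. -/
noncomputable def spow (x a : ℝ) : ℝ := Real.sign x * |x| ^ a

/-- Dilation `Λ_r(l, x) = (l^{r₁} x₁, …, l^{rₙ} xₙ)`. -/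
noncomputable def dil {n : ℕ} (r : Fin n → ℝ) (l : ℝ) (x : Fin n → ℝ) : Fin n → ℝ :=
  fun i => l ^ r i * x i

/-- `x` is a solution of `ẋ = F(x)` on `[s, ∞)`. -/
def IsSolOn {E : Type*} [NormedAddCommGroup E] [NormedSpace ℝ E]
    (F : E → E) (x : ℝ → E) (s : ℝ) : Prop :=
  ∀ t ∈ Set.Ici s, HasDerivWithinAt x (F (x t)) (Set.Ici s) t

/-- The origin is (locally) asymptotically stable for `ẋ = F(x)`. -/
def AsympStable {E : Type*} [NormedAddCommGroup E] [NormedSpace ℝ E] (F : E → E) : Prop :=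
  (∀ ε > 0, ∃ η > 0, ∀ x : ℝ → E, IsSolOn F x 0 → ‖x 0‖ < η → ∀ t ≥ 0, ‖x t‖ < ε) ∧
  (∃ δ > 0, ∀ x : ℝ → E, IsSolOn F x 0 → ‖x 0‖ < δ →
    Filter.Tendsto x Filter.atTop (nhds 0))

/-- The origin is small-time stable for `ẋ = F(x)`. -/
def SmallTimeStable {E : Type*} [NormedAddCommGroup E] [NormedSpace ℝ E] (F : E → E) : Prop :=
  ∀ ε > 0, ∃ η > 0, ∀ x : ℝ → E, IsSolOn F x 0 → ‖x 0‖ < η →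
    x ε = 0 ∧ ∀ t ≥ 0, ‖x t‖ < ε

lemma spow_zero (a : ℝ) : spow 0 a = 0 := by simp [spow]

lemma spow_of_pos {x : ℝ} (hx : 0 < x) (a : ℝ) : spow x a = x ^ a := by
  rw [spow, Real.sign_of_pos hx, abs_of_pos hx, one_mul]

lemma spow_of_neg {x : ℝ} (hx : x < 0) (a : ℝ) : spow x a = -(-x) ^ a := by
  rw [spow, Real.sign_of_neg hx, abs_of_neg hx]; ring

lemma abs_spow_le (x a : ℝ) : |spow x a| ≤ |x| ^ a := by
  rw [spow, abs_mul, abs_of_nonneg (Real.rpow_nonneg (abs_nonneg x) a)]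
  rcases lt_trichotomy x 0 with h | h | h
  · rw [Real.sign_of_neg h]; simp
  · subst h; simp [Real.rpow_nonneg]
  · rw [Real.sign_of_pos h]; simp

lemma spow_mul_spow {x : ℝ} (a b : ℝ) (ha : 0 < a) (hb : 0 < b) :
    spow x a * spow x b = |x| ^ (a + b) := by
  rcases eq_or_ne x 0 with rfl | hx
  · simp [spow_zero, Real.zero_rpow (by positivity : a + b ≠ 0)]
  · have h : |x| ≠ 0 := abs_ne_zero.mpr hx
    rw [spow, spow, Real.rpow_add (abs_pos.mpr hx)]
    have : Real.sign x * Real.sign x = 1 := by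
      rcases lt_or_gt_of_ne hx with h' | h'
      · rw [Real.sign_of_neg h']; norm_num
      · rw [Real.sign_of_pos h']; norm_num
    calc Real.sign x * |x| ^ a * (Real.sign x * |x| ^ b)
        = (Real.sign x * Real.sign x) * (|x| ^ a * |x| ^ b) := by ring
      _ = |x| ^ a * |x| ^ b := by rw [this, one_mul]

lemma mul_spow_self {x : ℝ} (b : ℝ) (hb : 0 < b) :
    x * spow x b = |x| ^ (1 + b) := by
  rcases lt_trichotomy x 0 with h | h | h
  · rw [spow_of_neg h, Real.rpow_add (by linarith [abs_pos.mpr h.ne] : (0:ℝ) < |x|),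
      Real.rpow_one, abs_of_neg h]; ring
  · subst h; simp [spow_zero, Real.zero_rpow (by positivity : (1:ℝ) + b ≠ 0)]
  · rw [spow_of_pos h, Real.rpow_add (abs_pos.mpr h.ne') , Real.rpow_one, abs_of_pos h]

lemma spow_const_mul {c : ℝ} (hc : 0 < c) (x a : ℝ) :
    spow (c * x) a = c ^ a * spow x a := by
  rcases lt_trichotomy x 0 with h | h | h
  · rw [spow_of_neg h, spow_of_neg (by nlinarith : c * x < 0)]
    rw [neg_mul_eq_mul_neg, Real.mul_rpow hc.le (by linarith)]
    ring
  · subst h; simp [spow_zero]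
  · rw [spow_of_pos h, spow_of_pos (by positivity)]
    rw [Real.mul_rpow hc.le h.le]

lemma abs_rpow_const_mul {c : ℝ} (hc : 0 < c) (x a : ℝ) :
    |c * x| ^ a = c ^ a * |x| ^ a := by
  rw [abs_mul, abs_of_pos hc, Real.mul_rpow hc.le (abs_nonneg x)]

lemma tendsto_abs_rpow_zero {a : ℝ} (ha : 0 < a) :
    Tendsto (fun y : ℝ => |y| ^ a) (nhds 0) (nhds 0) := by
  have h1 : ContinuousAt (fun z : ℝ => z ^ a) 0 :=
    Real.continuousAt_rpow_const 0 a (Or.inr ha.le)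
  have h2 : Tendsto (fun y : ℝ => |y|) (nhds 0) (nhds 0) := by
    simpa using continuous_abs.tendsto (0 : ℝ)
  have := h1.tendsto.comp h2
  simpa [Function.comp_def, Real.zero_rpow ha.ne'] using this

lemma spow_eq_abs_mul (a : ℝ) (ha : 1 < a) (x : ℝ) : spow x (a-1) = |x| ^ (a - 2) * x := by
  rcases lt_trichotomy x 0 with h | h | h
  · have h1 : (-x) ^ (a-1) = (-x) ^ (a-2) * (-x) := by
      rw [← Real.rpow_add_one (by linarith : (-x) ≠ 0) (a-2)]
      norm_num [show a - 2 + 1 = a - 1 by ring]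
    rw [spow_of_neg h, abs_of_neg h, h1]; ring
  · subst h; simp [spow_zero]
  · have h1 : x ^ (a-1) = x ^ (a-2) * x := by
      rw [← Real.rpow_add_one h.ne' (a-2)]
      norm_num [show a - 2 + 1 = a - 1 by ring]
    rw [spow_of_pos h, abs_of_pos h, h1]

lemma hasDerivAt_abs_rpow' {a : ℝ} (ha : 1 < a) (x : ℝ) :
    HasDerivAt (fun y => |y| ^ a) (a * spow x (a - 1)) x := by
  have := hasDerivAt_abs_rpow x ha
  rw [spow_eq_abs_mul a ha, ← mul_assoc]
  exact this

lemma hasDerivAt_spow {a : ℝ} (ha : 1 < a) (x : ℝ) :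
    HasDerivAt (fun y => spow y a) (a * |x| ^ (a - 1)) x := by
  rcases lt_trichotomy x 0 with h | h | h
  · have h1 : HasDerivAt (fun y : ℝ => -y) (-1) x := hasDerivAt_neg x
    have h2 : HasDerivAt (fun z : ℝ => z ^ a) (a * (-x) ^ (a - 1)) (-x) :=
      Real.hasDerivAt_rpow_const (Or.inl (by linarith))
    have h3 := (h2.comp x h1).neg
    have h5 : (fun y : ℝ => -((-y) ^ a)) =ᶠ[nhds x] fun y => spow y a := by
      filter_upwards [Iio_mem_nhds h] with y hy
      rw [spow_of_neg hy]
    have h6 := h3.congr_of_eventuallyEq h5.symm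
    have e : a * |x| ^ (a - 1) = -(a * (-x) ^ (a - 1) * -1) := by rw [abs_of_neg h]; ring
    rw [e]; exact h6
  · subst h
    rw [hasDerivAt_iff_tendsto_slope]
    have hb : Tendsto (fun y : ℝ => |y| ^ (a - 1)) (nhdsWithin 0 {(0:ℝ)}ᶜ) (nhds 0) :=
      (tendsto_abs_rpow_zero (by linarith)).mono_left nhdsWithin_le_nhds
    have : a * |(0:ℝ)| ^ (a - 1) = 0 := by
      rw [abs_zero, Real.zero_rpow (by linarith : a - 1 ≠ 0)]; ring
    rw [this]
    apply squeeze_zero_norm _ hb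
    intro y
    rcases eq_or_ne y 0 with rfl | hy
    · simp [slope_def_field, Real.rpow_nonneg]
    · rw [slope_def_field, spow_zero, sub_zero, sub_zero, spow]
      rw [norm_div, Real.norm_eq_abs, Real.norm_eq_abs, abs_mul,
        abs_of_nonneg (Real.rpow_nonneg (abs_nonneg y) a)]
      have hsy : |Real.sign y| = 1 := by
        rcases lt_or_gt_of_ne hy with h' | h'
        · rw [Real.sign_of_neg h']; norm_num
        · rw [Real.sign_of_pos h']; norm_num
      rw [hsy, one_mul, ← Real.rpow_sub_one (abs_ne_zero.mpr hy)]
  · have h2 : HasDerivAt (fun z : ℝ => z ^ a) (a * x ^ (a - 1)) x :=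
      Real.hasDerivAt_rpow_const (Or.inl h.ne')
    have h5 : (fun y : ℝ => y ^ a) =ᶠ[nhds x] fun y => spow y a := by
      filter_upwards [Ioi_mem_nhds h] with y hy
      rw [spow_of_pos hy]
    have h6 := h2.congr_of_eventuallyEq h5.symm
    rw [abs_of_pos h]; exact h6

/-- Weak Lyapunov function for the double integrator. -/
noncomputable def V0 (ν k₁ : ℝ) (p : ℝ × ℝ) : ℝ :=
  k₁/(2*ν) * |p.1| ^ (2*ν) + p.2^2/2

/-- Strict Lyapunov function. -/
noncomputable def Vf (ν k₁ ε : ℝ) (p : ℝ × ℝ) : ℝ :=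
  (V0 ν k₁ p)^2 + ε * spow p.1 (3*ν) * p.2

/-- Derivative of `Vf` along the closed-loop vector field. -/
noncomputable def Pf (ν k₁ k₂ ε : ℝ) (p : ℝ × ℝ) : ℝ :=
  -(2*k₂) * (V0 ν k₁ p) * |p.2| ^ (1 + (2*ν-1)/ν)
    + ε * (3*ν * |p.1| ^ (3*ν-1) * p.2^2 - k₁ * |p.1| ^ (5*ν-1)
        - k₂ * spow p.1 (3*ν) * spow p.2 ((2*ν-1)/ν))

lemma V0_homog {ν k₁ l : ℝ} (hν : 1/2 < ν) (hν1 : ν < 1) (hl : 0 < l) (y : ℝ × ℝ) :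
    V0 ν k₁ (l * y.1, l ^ ν * y.2) = l ^ (2*ν) * V0 ν k₁ y := by
  have hmul : ∀ a b : ℝ, l ^ a * l ^ b = l ^ (a+b) := fun a b => (Real.rpow_add hl a b).symm
  have h1 : |l * y.1| ^ (2*ν) = l ^ (2*ν) * |y.1| ^ (2*ν) := abs_rpow_const_mul hl _ _
  have h2 : (l ^ ν * y.2)^2 = l ^ (2*ν) * y.2^2 := by
    have : l ^ ν * l ^ ν = l ^ (2*ν) := by rw [hmul]; ring_nf
    calc (l ^ ν * y.2)^2 = (l ^ ν * l ^ ν) * y.2^2 := by ring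
      _ = l ^ (2*ν) * y.2^2 := by rw [this]
  simp only [V0, h1, h2]
  ring

lemma Vf_homog {ν k₁ ε l : ℝ} (hν : 1/2 < ν) (hν1 : ν < 1) (hl : 0 < l) (y : ℝ × ℝ) :
    Vf ν k₁ ε (l * y.1, l ^ ν * y.2) = l ^ (4*ν) * Vf ν k₁ ε y := by
  have hmul : ∀ a b : ℝ, l ^ a * l ^ b = l ^ (a+b) := fun a b => (Real.rpow_add hl a b).symm
  have h1 : spow (l * y.1) (3*ν) = l ^ (3*ν) * spow y.1 (3*ν) := spow_const_mul hl _ _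
  have h2 : l ^ (2*ν) * l ^ (2*ν) = l ^ (4*ν) := by rw [hmul]; ring_nf
  have h3 : l ^ (3*ν) * l ^ ν = l ^ (4*ν) := by rw [hmul]; ring_nf
  simp only [Vf, V0_homog hν hν1 hl, h1]
  calc (l ^ (2*ν) * V0 ν k₁ y)^2 + ε * (l ^ (3*ν) * spow y.1 (3*ν)) * (l ^ ν * y.2)
      = (l ^ (2*ν) * l ^ (2*ν)) * (V0 ν k₁ y)^2
        + (l ^ (3*ν) * l ^ ν) * (ε * spow y.1 (3*ν) * y.2) := by ring
    _ = l ^ (4*ν) * ((V0 ν k₁ y)^2 + ε * spow y.1 (3*ν) * y.2) := by rw [h2, h3]; ring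

lemma Pf_homog {ν k₁ k₂ ε l : ℝ} (hν : 1/2 < ν) (hν1 : ν < 1) (hl : 0 < l) (y : ℝ × ℝ) :
    Pf ν k₁ k₂ ε (l * y.1, l ^ ν * y.2) = l ^ (5*ν-1) * Pf ν k₁ k₂ ε y := by
  have hν0 : ν ≠ 0 := by positivity
  have hmul : ∀ a b : ℝ, l ^ a * l ^ b = l ^ (a+b) := fun a b => (Real.rpow_add hl a b).symm
  have hβ : ν * (1 + (2*ν-1)/ν) = 3*ν - 1 := by field_simp; ring
  have hβ2 : ν * ((2*ν-1)/ν) = 2*ν - 1 := by field_simp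
  have hνν : ν * 2 = 2 * ν := by ring
  have h1 : |l ^ ν * y.2| ^ (1 + (2*ν-1)/ν) = l ^ (3*ν-1) * |y.2| ^ (1 + (2*ν-1)/ν) := by
    rw [abs_rpow_const_mul (Real.rpow_pos_of_pos hl ν), ← Real.rpow_mul hl.le, hβ]
  have h2 : spow (l ^ ν * y.2) ((2*ν-1)/ν) = l ^ (2*ν-1) * spow y.2 ((2*ν-1)/ν) := by
    rw [spow_const_mul (Real.rpow_pos_of_pos hl ν), ← Real.rpow_mul hl.le, hβ2]
  have h3 : (l ^ ν * y.2)^2 = l ^ (2*ν) * y.2^2 := by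
    have h : l ^ ν * l ^ ν = l ^ (2*ν) := by rw [hmul]; ring_nf
    calc (l ^ ν * y.2)^2 = (l ^ ν * l ^ ν) * y.2^2 := by ring
      _ = l ^ (2*ν) * y.2^2 := by rw [h]
  have h4 : |l * y.1| ^ (3*ν-1) = l ^ (3*ν-1) * |y.1| ^ (3*ν-1) := abs_rpow_const_mul hl _ _
  have h5 : |l * y.1| ^ (5*ν-1) = l ^ (5*ν-1) * |y.1| ^ (5*ν-1) := abs_rpow_const_mul hl _ _
  have h6 : spow (l * y.1) (3*ν) = l ^ (3*ν) * spow y.1 (3*ν) := spow_const_mul hl _ _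
  have e1 : l ^ (2*ν) * l ^ (3*ν-1) = l ^ (5*ν-1) := by rw [hmul]; ring_nf
  have e2 : l ^ (3*ν-1) * l ^ (2*ν) = l ^ (5*ν-1) := by rw [hmul]; ring_nf
  have e3 : l ^ (3*ν) * l ^ (2*ν-1) = l ^ (5*ν-1) := by rw [hmul]; ring_nf
  simp only [Pf, V0_homog hν hν1 hl, h1, h2, h3, h4, h5, h6]
  calc -(2*k₂) * (l ^ (2*ν) * V0 ν k₁ y) * (l ^ (3*ν-1) * |y.2| ^ (1 + (2*ν-1)/ν))
        + ε * (3*ν * (l ^ (3*ν-1) * |y.1| ^ (3*ν-1)) * (l ^ (2*ν) * y.2^2)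
          - k₁ * (l ^ (5*ν-1) * |y.1| ^ (5*ν-1))
          - k₂ * (l ^ (3*ν) * spow y.1 (3*ν)) * (l ^ (2*ν-1) * spow y.2 ((2*ν-1)/ν)))
      = (l ^ (2*ν) * l ^ (3*ν-1)) * (-(2*k₂) * V0 ν k₁ y * |y.2| ^ (1 + (2*ν-1)/ν))
        + (l ^ (3*ν-1) * l ^ (2*ν)) * (ε * (3*ν * |y.1| ^ (3*ν-1) * y.2^2))
        - l ^ (5*ν-1) * (ε * (k₁ * |y.1| ^ (5*ν-1)))
        - (l ^ (3*ν) * l ^ (2*ν-1)) * (ε * (k₂ * spow y.1 (3*ν) * spow y.2 ((2*ν-1)/ν))) := by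
          ring
    _ = l ^ (5*ν-1) * Pf ν k₁ k₂ ε y := by rw [e1, e2, e3, Pf]; ring

lemma rpow_le_rpow_exp {t q r : ℝ} (ht : 0 ≤ t) (ht1 : t ≤ 1) (h0 : 0 < q) (hqr : q ≤ r) :
    t ^ r ≤ t ^ q := by
  rcases eq_or_lt_of_le ht with rfl | h
  · rw [Real.zero_rpow (by linarith : r ≠ 0), Real.zero_rpow h0.ne']
  · exact Real.rpow_le_rpow_of_exponent_ge h ht1 hqr

set_option maxHeartbeats 2000000 in
lemma sphere_bound {ν k₁ k₂ : ℝ} (hν : 1/2 < ν) (hν1 : ν < 1)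
    (hk₁ : 0 < k₁) (hk₂ : 0 < k₂) :
    ∃ ε > 0, ∃ c > 0, ∃ c₁ > 0, ∃ C > 0, ∀ y : ℝ × ℝ, y.1^2 + |y.2| ^ (2/ν) = 1 →
      Pf ν k₁ k₂ ε y ≤ -c ∧ c₁ ≤ Vf ν k₁ ε y ∧ Vf ν k₁ ε y ≤ C := by
  have hν0 : (0:ℝ) < ν := by linarith
  set β : ℝ := (2*ν-1)/ν with hβdef
  have hβpos : 0 < β := by apply div_pos <;> linarith
  have hβlt : β < 1 := by rw [hβdef, div_lt_one hν0]; linarith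
  have h1β : 1 + β ≤ 2 := by linarith
  set K : ℝ := 3 + k₂ with hKdef
  have hK : 0 < K := by rw [hKdef]; linarith
  have hK' : K ≠ 0 := hK.ne'
  have h32K : (0:ℝ) < 32*K := by linarith
  set δ : ℝ := min 1 ((k₁/(32*K)) ^ (1/β : ℝ)) with hδdef
  have hδpos : 0 < δ := lt_min one_pos (Real.rpow_pos_of_pos (div_pos hk₁ h32K) _)
  have hδ1 : δ ≤ 1 := min_le_left _ _
  have hδβ : δ ^ (β:ℝ) ≤ k₁/(32*K) := by
    calc δ ^ (β:ℝ) ≤ ((k₁/(32*K)) ^ (1/β : ℝ)) ^ (β:ℝ) :=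
          Real.rpow_le_rpow hδpos.le (min_le_right _ _) hβpos.le
      _ = k₁/(32*K) := by
          rw [← Real.rpow_mul (div_pos hk₁ h32K).le, one_div_mul_cancel hβpos.ne',
            Real.rpow_one]
  set c₀ : ℝ := min (k₁/2) (1/2) with hc₀def
  have hc₀ : 0 < c₀ := lt_min (by linarith) (by norm_num)
  have hc₀a : c₀ ≤ k₁/2 := min_le_left _ _
  have hc₀b : c₀ ≤ 1/2 := min_le_right _ _
  set ε : ℝ := min (min 1 (k₂/(32*K))) (min (k₁*k₂*δ^2/(4*K)) (c₀^2/2)) with hεdef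
  have hε : 0 < ε := by
    apply lt_min (lt_min one_pos (div_pos hk₂ h32K))
    apply lt_min (div_pos (mul_pos (mul_pos hk₁ hk₂) (pow_pos hδpos 2)) (by linarith))
    exact div_pos (pow_pos hc₀ 2) two_pos
  have hε1 : ε ≤ 1 := le_trans (min_le_left _ _) (min_le_left _ _)
  have hεa : ε * K ≤ k₂/32 := by
    have h : ε ≤ k₂/(32*K) := le_trans (min_le_left _ _) (min_le_right _ _)
    calc ε * K ≤ (k₂/(32*K)) * K := mul_le_mul_of_nonneg_right h hK.le
      _ = k₂/32 := by field_simp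
  have hεb : ε * K ≤ k₁*k₂*δ^2/4 := by
    have h : ε ≤ k₁*k₂*δ^2/(4*K) := le_trans (min_le_right _ _) (min_le_left _ _)
    calc ε * K ≤ (k₁*k₂*δ^2/(4*K)) * K := mul_le_mul_of_nonneg_right h hK.le
      _ = k₁*k₂*δ^2/4 := by field_simp
  have hεc : ε ≤ c₀^2/2 := le_trans (min_le_right _ _) (min_le_right _ _)
  clear_value β K δ c₀ ε
  refine ⟨ε, hε, min (k₂/32) (min (ε*k₁/32) (k₁*k₂*δ^2/4)), ?_, c₀^2/2,
    div_pos (pow_pos hc₀ 2) two_pos, (k₁+1/2)^2 + 1, by positivity, ?_⟩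
  · exact lt_min (by linarith) (lt_min (div_pos (mul_pos hε hk₁) (by norm_num))
      (div_pos (mul_pos (mul_pos hk₁ hk₂) (pow_pos hδpos 2)) (by norm_num)))
  intro y hS
  set a : ℝ := |y.1| with hadef
  set b : ℝ := |y.2| with hbdef
  have ha : 0 ≤ a := abs_nonneg _
  have hb : 0 ≤ b := abs_nonneg _
  have hSa : a^2 + b ^ (2/ν) = 1 := by rw [hadef, sq_abs]; exact hS
  have hbge : 0 ≤ b ^ (2/ν) := Real.rpow_nonneg hb _
  have ha1 : a ≤ 1 := by nlinarith only [hSa, hbge, ha]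
  have hb1 : b ≤ 1 := by
    by_contra hc
    push_neg at hc
    have : (1:ℝ) < b ^ (2/ν) := by
      have := Real.rpow_lt_rpow (by norm_num : (0:ℝ) ≤ 1) hc (by positivity : (0:ℝ) < 2/ν)
      simpa using this
    linarith only [hSa, sq_nonneg a, this]
  -- V0 bounds
  have hV0nn : 0 ≤ V0 ν k₁ y := by
    apply add_nonneg
    · exact mul_nonneg (div_nonneg hk₁.le (by linarith)) (Real.rpow_nonneg (abs_nonneg _) _)
    · positivity
  have harp : ∀ q : ℝ, 0 < q → a ^ (q:ℝ) ≤ 1 := fun q hq => Real.rpow_le_one ha ha1 hq.le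
  have hbrp : ∀ q : ℝ, 0 < q → b ^ (q:ℝ) ≤ 1 := fun q hq => Real.rpow_le_one hb hb1 hq.le
  have hb2β : b^2 ≤ b ^ (β:ℝ) := by
    have := rpow_le_rpow_exp hb hb1 hβpos (by linarith : β ≤ 2)
    rwa [show ((2:ℝ)) = ((2:ℕ):ℝ) by norm_num, Real.rpow_natCast] at this
  have hd : k₁/2 ≤ k₁/(2*ν) := by
    rw [div_le_div_iff₀ (by norm_num) (by linarith)]; nlinarith only [hk₁, hν1]
  have ha2ν : a^(2:ℝ) ≤ a ^ (2*ν) := rpow_le_rpow_exp ha ha1 (by linarith) (by linarith)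
  have hanat : a^(2:ℝ) = a^2 := by
    rw [show ((2:ℝ)) = ((2:ℕ):ℝ) by norm_num, Real.rpow_natCast]
  have hbnat : b^(2:ℝ) = b^2 := by
    rw [show ((2:ℝ)) = ((2:ℕ):ℝ) by norm_num, Real.rpow_natCast]
  -- the master inequality
  have hmaster : Pf ν k₁ k₂ ε y ≤
      -(2*k₂) * V0 ν k₁ y * b ^ (1+β) + ε*K*b ^ (β:ℝ) - ε*k₁*a ^ (5*ν-1) := by
    rw [Pf, ← hβdef, ← hadef, ← hbdef]
    have e1 : 3*ν * a ^ (3*ν-1) * y.2^2 ≤ 3 * b ^ (β:ℝ) := by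
      have h1 : a ^ (3*ν-1) ≤ 1 := harp _ (by linarith)
      have h0 : 0 ≤ a ^ (3*ν-1) := Real.rpow_nonneg ha _
      have h2 : y.2^2 ≤ b ^ (β:ℝ) := by rw [← sq_abs]; exact hb2β
      have h3 : (0:ℝ) ≤ y.2^2 := sq_nonneg _
      have c1 : 3*ν * a ^ (3*ν-1) ≤ 3 := by nlinarith only [h1, h0, hν1, hν0]
      exact mul_le_mul c1 h2 h3 (by norm_num)
    have e2 : -(k₂ * (spow y.1 (3*ν) * spow y.2 β)) ≤ k₂ * b ^ (β:ℝ) := by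
      have habs : |spow y.1 (3*ν) * spow y.2 β| ≤ b ^ (β:ℝ) := by
        rw [abs_mul]
        have g1 : |spow y.1 (3*ν)| ≤ 1 := le_trans (abs_spow_le _ _) (harp _ (by linarith))
        have g2 : |spow y.2 β| ≤ b ^ (β:ℝ) := abs_spow_le _ _
        calc |spow y.1 (3*ν)| * |spow y.2 β| ≤ 1 * (b ^ (β:ℝ)) :=
              mul_le_mul g1 g2 (abs_nonneg _) zero_le_one
          _ = b ^ (β:ℝ) := one_mul _
      have h2 : -(spow y.1 (3*ν) * spow y.2 β) ≤ b ^ (β:ℝ) := by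
        have := (abs_le.mp habs).1; linarith
      calc -(k₂ * (spow y.1 (3*ν) * spow y.2 β))
          = k₂ * (-(spow y.1 (3*ν) * spow y.2 β)) := by ring
        _ ≤ k₂ * b ^ (β:ℝ) := mul_le_mul_of_nonneg_left h2 hk₂.le
    have e3 : ε * (3*ν * a ^ (3*ν-1) * y.2^2 - k₁ * a ^ (5*ν-1)
          - k₂ * spow y.1 (3*ν) * spow y.2 β)
        ≤ ε*K*b ^ (β:ℝ) - ε*k₁*a ^ (5*ν-1) := by
      have h4 : 3*ν * a ^ (3*ν-1) * y.2^2 - k₁ * a ^ (5*ν-1)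
          - k₂ * spow y.1 (3*ν) * spow y.2 β ≤ K * b ^ (β:ℝ) - k₁ * a ^ (5*ν-1) := by
        rw [hKdef]; linarith only [e1, e2]
      calc ε * (3*ν * a ^ (3*ν-1) * y.2^2 - k₁ * a ^ (5*ν-1)
            - k₂ * spow y.1 (3*ν) * spow y.2 β)
          ≤ ε * (K * b ^ (β:ℝ) - k₁ * a ^ (5*ν-1)) := mul_le_mul_of_nonneg_left h4 hε.le
        _ = ε*K*b ^ (β:ℝ) - ε*k₁*a ^ (5*ν-1) := by ring
    linarith only [e3]
  have hbβ1 : b ^ (β:ℝ) ≤ 1 := hbrp _ hβpos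
  have haA : (0:ℝ) ≤ a ^ (5*ν-1) := Real.rpow_nonneg ha _
  have hb1β : (0:ℝ) ≤ b ^ (1+β) := Real.rpow_nonneg hb _
  constructor
  · -- Pf ≤ -c
    rcases le_total (1/2 : ℝ) (b ^ (2/ν)) with hcase | hcase
    · -- Case 1 : b large
      have hbhalf : 1/2 ≤ b := by
        have h1 : b ^ (2/ν) ≤ b ^ (1:ℝ) := by
          apply rpow_le_rpow_exp hb hb1 one_pos
          rw [le_div_iff₀ hν0]; linarith
        rw [Real.rpow_one] at h1; linarith only [h1, hcase]
      have hV0b : 1/8 ≤ V0 ν k₁ y := by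
        have h1 : (1:ℝ)/4 ≤ y.2^2 := by rw [← sq_abs]; nlinarith only [hbhalf, hb]
        have h2 : 0 ≤ k₁/(2*ν) * |y.1| ^ (2*ν) :=
          mul_nonneg (div_nonneg hk₁.le (by linarith)) (Real.rpow_nonneg (abs_nonneg _) _)
        rw [V0]; linarith only [h1, h2]
      have hbpow : 1/4 ≤ b ^ (1+β) := by
        have h1 : b^(2:ℝ) ≤ b ^ (1+β) := rpow_le_rpow_exp hb hb1 (by linarith) h1β
        rw [hbnat] at h1; nlinarith only [h1, hbhalf, hb]
      have hmain : -(2*k₂) * V0 ν k₁ y * b ^ (1+β) ≤ -(k₂/16) := by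
        nlinarith only [mul_le_mul hV0b hbpow (by norm_num) hV0nn, hk₂]
      have h5 : ε*K*b ^ (β:ℝ) ≤ k₂/32 := by
        linarith only [mul_le_mul_of_nonneg_left hbβ1 (mul_nonneg hε.le hK.le), hεa]
      have : Pf ν k₁ k₂ ε y ≤ -(k₂/32) := by
        linarith only [hmaster, hmain, h5, mul_nonneg (mul_nonneg hε.le hk₁.le) haA]
      calc Pf ν k₁ k₂ ε y ≤ -(k₂/32) := this
        _ ≤ -(min (k₂/32) (min (ε*k₁/32) (k₁*k₂*δ^2/4))) := by
            apply neg_le_neg; exact min_le_left _ _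
    · -- Case 2 : b small, a large
      have ha2 : 1/2 ≤ a^2 := by linarith only [hcase, hSa, hbge]
      have hahalf : 1/2 ≤ a := by nlinarith only [ha2, ha, ha1]
      have hA : 1/16 ≤ a ^ (5*ν-1) := by
        have h1 : a^((4:ℝ)) ≤ a ^ (5*ν-1) := rpow_le_rpow_exp ha ha1 (by linarith) (by linarith)
        have h2 : ((1:ℝ)/2)^((4:ℝ)) ≤ a^((4:ℝ)) := Real.rpow_le_rpow (by norm_num) hahalf (by norm_num)
        have h3 : ((1:ℝ)/2)^((4:ℝ)) = 1/16 := by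
          rw [show ((4:ℝ)) = ((4:ℕ):ℝ) by norm_num, Real.rpow_natCast]; norm_num
        linarith
      have hV0c : k₁/4 ≤ V0 ν k₁ y := by
        have h1 : (k₁/2) * a^2 ≤ (k₁/(2*ν)) * a ^ (2*ν) := by
          have t : a^2 ≤ a ^ (2*ν) := by rw [← hanat]; exact ha2ν
          exact mul_le_mul hd t (sq_nonneg a) (div_nonneg hk₁.le (by linarith))
        have h2 : k₁/4 ≤ (k₁/2) * a^2 := by nlinarith only [ha2, hk₁]
        rw [V0, ← hadef]; linarith only [h1, h2, sq_nonneg y.2]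
      rcases le_total b δ with hbδ | hbδ
      · -- 2a : b tiny
        have hbβδ : b ^ (β:ℝ) ≤ k₁/(32*K) :=
          le_trans (Real.rpow_le_rpow hb hbδ hβpos.le) hδβ
        have h5 : ε*K*b ^ (β:ℝ) ≤ ε*k₁/32 := by
          have := mul_le_mul_of_nonneg_left hbβδ (mul_nonneg hε.le hK.le)
          calc ε*K*b ^ (β:ℝ) ≤ ε*K*(k₁/(32*K)) := this
            _ = ε*k₁/32 := by field_simp
        have h6 : ε*k₁/16 ≤ ε*k₁*a ^ (5*ν-1) := by nlinarith only [hA, mul_pos hε hk₁]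
        have h7 : -(2*k₂) * V0 ν k₁ y * b ^ (1+β) ≤ 0 := by
          nlinarith only [hk₂, mul_nonneg hV0nn hb1β]
        have : Pf ν k₁ k₂ ε y ≤ -(ε*k₁/32) := by linarith only [hmaster, h5, h6, h7]
        calc Pf ν k₁ k₂ ε y ≤ -(ε*k₁/32) := this
          _ ≤ -(min (k₂/32) (min (ε*k₁/32) (k₁*k₂*δ^2/4))) := by
              apply neg_le_neg; exact le_trans (min_le_right _ _) (min_le_left _ _)
      · -- 2b : b ≥ δ
        have hbpow : δ^2 ≤ b ^ (1+β) := by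
          have h1 : δ^((2:ℝ)) ≤ δ ^ (1+β) := rpow_le_rpow_exp hδpos.le hδ1 (by linarith) h1β
          have h2 : δ ^ (1+β) ≤ b ^ (1+β) := Real.rpow_le_rpow hδpos.le hbδ (by linarith)
          have h3 : δ^((2:ℝ)) = δ^2 := by
            rw [show ((2:ℝ)) = ((2:ℕ):ℝ) by norm_num, Real.rpow_natCast]
          rw [← h3]; exact h1.trans h2
        have hmain : -(2*k₂) * V0 ν k₁ y * b ^ (1+β) ≤ -(k₁*k₂/2 * δ^2) := by
          nlinarith only [mul_le_mul hV0c hbpow (sq_nonneg δ) hV0nn, hk₂]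
        have h5 : ε*K*b ^ (β:ℝ) ≤ k₁*k₂*δ^2/4 := by
          linarith only [mul_le_mul_of_nonneg_left hbβ1 (mul_nonneg hε.le hK.le), hεb]
        have : Pf ν k₁ k₂ ε y ≤ -(k₁*k₂*δ^2/4) := by
          linarith only [hmaster, hmain, h5, mul_nonneg (mul_nonneg hε.le hk₁.le) haA]
        calc Pf ν k₁ k₂ ε y ≤ -(k₁*k₂*δ^2/4) := this
          _ ≤ -(min (k₂/32) (min (ε*k₁/32) (k₁*k₂*δ^2/4))) := by
              apply neg_le_neg; exact le_trans (min_le_right _ _) (min_le_right _ _)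
  -- Vf bounds
  have hcross : |spow y.1 (3*ν) * y.2| ≤ 1 := by
    rw [abs_mul]
    have g1 : |spow y.1 (3*ν)| ≤ 1 := le_trans (abs_spow_le _ _) (harp _ (by linarith))
    calc |spow y.1 (3*ν)| * |y.2| ≤ 1 * 1 := mul_le_mul g1 hb1 hb zero_le_one
      _ = 1 := one_mul 1
  have hcross' := abs_le.mp hcross
  have hV0c₀ : c₀ ≤ V0 ν k₁ y := by
    have h1 : (k₁/2) * a^2 ≤ (k₁/(2*ν)) * a ^ (2*ν) := by
      have t : a^2 ≤ a ^ (2*ν) := by rw [← hanat]; exact ha2ν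
      exact mul_le_mul hd t (sq_nonneg a) (div_nonneg hk₁.le (by linarith))
    have h2r : (2:ℝ) ≤ 2/ν := by rw [le_div_iff₀ hν0]; nlinarith only [hν1, hν0]
    have h2' : b ^ ((2:ℝ)/ν) ≤ b ^ ((2:ℝ)) := rpow_le_rpow_exp hb hb1 two_pos h2r
    have h2 : b ^ (2/ν) ≤ b^2 := by rwa [hbnat] at h2'
    have h3 := hc₀a
    have h4 := hc₀b
    have h5 : c₀ * (a^2 + b ^ (2/ν)) ≤ (k₁/2) * a^2 + (1/2) * b ^ (2/ν) := by
      nlinarith only [h3, h4, sq_nonneg a, hbge]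
    rw [V0, ← hadef]
    have h6 : y.2^2 = b^2 := (sq_abs y.2).symm
    rw [h6]
    have h7 : c₀ * (a^2 + b ^ (2/ν)) = c₀ := by rw [hSa, mul_one]
    linarith only [h1, h2, h5, h7]
  have hV0le : V0 ν k₁ y ≤ k₁ + 1/2 := by
    have h1 : k₁/(2*ν) * a ^ (2*ν) ≤ k₁ := by
      have g1 : a ^ (2*ν) ≤ 1 := harp _ (by linarith)
      have g2 : k₁/(2*ν) ≤ k₁ := by
        rw [div_le_iff₀ (by linarith)]; nlinarith only [hk₁, hν]
      have g3 : 0 ≤ k₁/(2*ν) := div_nonneg hk₁.le (by linarith)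
      nlinarith only [g1, g2, g3, Real.rpow_nonneg ha (2*ν)]
    have h2 : y.2^2 ≤ 1 := by rw [← sq_abs]; nlinarith only [hb1, hb]
    rw [V0, ← hadef]; linarith only [h1, h2]
  constructor
  · -- lower bound
    rw [Vf]
    have h1 : c₀^2 ≤ (V0 ν k₁ y)^2 := by nlinarith only [hV0c₀, hc₀, hV0nn]
    have h2 : -(ε:ℝ) ≤ ε * (spow y.1 (3*ν) * y.2) := by nlinarith only [hcross'.1, hε]
    calc c₀^2/2 = c₀^2 - c₀^2/2 := by ring
      _ ≤ (V0 ν k₁ y)^2 + ε * (spow y.1 (3*ν) * y.2) := by linarith only [h1, h2, hεc]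
      _ = (V0 ν k₁ y)^2 + ε * spow y.1 (3*ν) * y.2 := by ring
  · -- upper bound
    rw [Vf]
    have h1 : (V0 ν k₁ y)^2 ≤ (k₁ + 1/2)^2 := by nlinarith only [hV0nn, hV0le, hk₁]
    have h2 : ε * (spow y.1 (3*ν) * y.2) ≤ ε := by nlinarith only [hcross'.2, hε]
    calc (V0 ν k₁ y)^2 + ε * spow y.1 (3*ν) * y.2
        = (V0 ν k₁ y)^2 + ε * (spow y.1 (3*ν) * y.2) := by ring
      _ ≤ (k₁ + 1/2)^2 + 1 := by linarith only [h1, h2, hε1]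

/-- Homogeneous "norm". -/
noncomputable def rho (ν : ℝ) (p : ℝ × ℝ) : ℝ := Real.sqrt (p.1^2 + |p.2| ^ (2/ν))

lemma rho_nonneg (ν : ℝ) (p : ℝ × ℝ) : 0 ≤ rho ν p := Real.sqrt_nonneg _

lemma rho_zero (ν : ℝ) (hν0 : 0 < ν) : rho ν (0, 0) = 0 := by
  simp [rho, Real.zero_rpow (by positivity : 2/ν ≠ 0)]

lemma rho_pos {ν : ℝ} (hν0 : 0 < ν) {p : ℝ × ℝ} (hp : p ≠ 0) : 0 < rho ν p := by
  apply Real.sqrt_pos.mpr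
  rcases eq_or_ne p.1 0 with h1 | h1
  · have h2 : p.2 ≠ 0 := by
      intro h2
      exact hp (Prod.ext h1 h2)
    have : 0 < |p.2| ^ (2/ν) := Real.rpow_pos_of_pos (abs_pos.mpr h2) _
    nlinarith [sq_nonneg p.1]
  · have : 0 < p.1^2 := by positivity
    nlinarith [Real.rpow_nonneg (abs_nonneg p.2) (2/ν)]

lemma Vf_zero (ν k₁ ε : ℝ) (hν0 : 0 < ν) : Vf ν k₁ ε (0, 0) = 0 := by
  simp [Vf, V0, spow_zero, Real.zero_rpow (by positivity : 2*ν ≠ 0)]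

lemma Pf_zero (ν k₁ k₂ ε : ℝ) (hν : 1/2 < ν) (hν1 : ν < 1) : Pf ν k₁ k₂ ε (0, 0) = 0 := by
  have h1 : (0:ℝ) < 1 + (2*ν-1)/ν := by
    have : 0 < (2*ν-1)/ν := by apply div_pos <;> linarith
    linarith
  simp [Pf, spow_zero, Real.zero_rpow h1.ne', Real.zero_rpow (by linarith : 3*ν-1 ≠ 0),
    Real.zero_rpow (by linarith : 5*ν-1 ≠ 0)]

set_option maxHeartbeats 1000000 in
lemma global_bound {ν k₁ k₂ : ℝ} (hν : 1/2 < ν) (hν1 : ν < 1)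
    (hk₁ : 0 < k₁) (hk₂ : 0 < k₂) :
    ∃ ε > 0, ∃ c₃ > 0, ∃ c₁ > 0, ∃ C > 0, ∀ p : ℝ × ℝ,
      0 ≤ Vf ν k₁ ε p ∧
      Pf ν k₁ k₂ ε p ≤ -c₃ * (Vf ν k₁ ε p) ^ ((5*ν-1)/(4*ν)) ∧
      c₁ * (rho ν p) ^ (4*ν) ≤ Vf ν k₁ ε p ∧
      Vf ν k₁ ε p ≤ C * (rho ν p) ^ (4*ν) := by
  have hν0 : (0:ℝ) < ν := by linarith
  obtain ⟨ε, hε, c, hc, c₁, hc₁, C, hC, hsph⟩ := sphere_bound hν hν1 hk₁ hk₂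
  set γ : ℝ := (5*ν-1)/(4*ν) with hγdef
  have hγpos : 0 < γ := by apply div_pos <;> linarith
  have hCγ : (0:ℝ) < C ^ (γ:ℝ) := Real.rpow_pos_of_pos hC _
  refine ⟨ε, hε, c / C ^ (γ:ℝ), div_pos hc hCγ, c₁, hc₁, C, hC, fun p => ?_⟩
  rcases eq_or_ne p 0 with rfl | hp
  · have hz : ((0:ℝ × ℝ)) = ((0:ℝ), (0:ℝ)) := rfl
    rw [hz, Vf_zero ν k₁ ε hν0, Pf_zero ν k₁ k₂ ε hν hν1, rho_zero ν hν0,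
      Real.zero_rpow hγpos.ne', Real.zero_rpow (by positivity : 4*ν ≠ 0)]
    norm_num
  · set l : ℝ := rho ν p with hldef
    have hl : 0 < l := rho_pos hν0 hp
    have hlν : (0:ℝ) < l ^ (ν:ℝ) := Real.rpow_pos_of_pos hl _
    set y1 : ℝ := p.1 / l with hy1def
    set y2 : ℝ := p.2 / l ^ (ν:ℝ) with hy2def
    have hy1 : l * y1 = p.1 := by rw [hy1def]; field_simp
    have hy2 : l ^ (ν:ℝ) * y2 = p.2 := by rw [hy2def]; field_simp
    have hsq : l^2 = p.1^2 + |p.2| ^ (2/ν) := Real.sq_sqrt (by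
      nlinarith [sq_nonneg p.1, Real.rpow_nonneg (abs_nonneg p.2) (2/ν)])
    have hyS : y1^2 + |y2| ^ (2/ν) = 1 := by
      have h1 : |y2| = |p.2| / l ^ (ν:ℝ) := by
        rw [hy2def, abs_div, abs_of_pos hlν]
      have h2 : (l ^ (ν:ℝ)) ^ ((2:ℝ)/ν) = l^2 := by
        rw [← Real.rpow_mul hl.le]
        rw [show ν * (2/ν) = 2 by field_simp]
        rw [show ((2:ℝ)) = ((2:ℕ):ℝ) by norm_num, Real.rpow_natCast]
      have h3 : |y2| ^ ((2:ℝ)/ν) = |p.2| ^ ((2:ℝ)/ν) / l^2 := by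
        rw [h1, Real.div_rpow (abs_nonneg _) hlν.le, h2]
      have h4 : y1^2 = p.1^2 / l^2 := by rw [hy1def, div_pow]
      rw [h3, h4, ← add_div, ← hsq, div_self (by positivity)]
    have hyp : p = (l * y1, l ^ (ν:ℝ) * y2) := by
      rw [hy1, hy2]
    obtain ⟨hP, hV1, hV2⟩ := hsph (y1, y2) hyS
    have hVp : Vf ν k₁ ε p = l ^ (4*ν) * Vf ν k₁ ε (y1, y2) := by
      rw [hyp]; exact Vf_homog hν hν1 hl (y1, y2)
    have hPp : Pf ν k₁ k₂ ε p = l ^ (5*ν-1) * Pf ν k₁ k₂ ε (y1, y2) := by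
      rw [hyp]; exact Pf_homog hν hν1 hl (y1, y2)
    have hl4 : (0:ℝ) < l ^ (4*ν) := Real.rpow_pos_of_pos hl _
    have hl5 : (0:ℝ) < l ^ (5*ν-1) := Real.rpow_pos_of_pos hl _
    have hVnn : 0 ≤ Vf ν k₁ ε p := by
      rw [hVp]; nlinarith only [hl4, hV1, hc₁]
    refine ⟨hVnn, ?_, ?_, ?_⟩
    · -- Pf bound
      have h1 : Vf ν k₁ ε p ≤ C * l ^ (4*ν) := by
        rw [hVp]; nlinarith only [hl4, hV2]
      have h2 : (Vf ν k₁ ε p) ^ (γ:ℝ) ≤ (C * l ^ (4*ν)) ^ (γ:ℝ) :=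
        Real.rpow_le_rpow hVnn h1 hγpos.le
      have h3 : (C * l ^ (4*ν)) ^ (γ:ℝ) = C ^ (γ:ℝ) * l ^ (5*ν-1) := by
        rw [Real.mul_rpow hC.le hl4.le, ← Real.rpow_mul hl.le]
        rw [show (4*ν) * γ = 5*ν-1 by rw [hγdef]; field_simp]
      have h4 : Pf ν k₁ k₂ ε p ≤ -c * l ^ (5*ν-1) := by
        rw [hPp]; nlinarith only [hl5, hP]
      have h5 : -(c / C ^ (γ:ℝ)) * (Vf ν k₁ ε p) ^ (γ:ℝ)
          ≥ -(c / C ^ (γ:ℝ)) * (C ^ (γ:ℝ) * l ^ (5*ν-1)) := by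
        rw [ge_iff_le, neg_mul, neg_mul, neg_le_neg_iff]
        apply mul_le_mul_of_nonneg_left _ (div_pos hc hCγ).le
        rw [← h3]; exact h2
      have h6 : -(c / C ^ (γ:ℝ)) * (C ^ (γ:ℝ) * l ^ (5*ν-1)) = -c * l ^ (5*ν-1) := by
        field_simp
      linarith only [h4, h5, h6.symm.le, h6.le]
    · rw [hVp, hldef]; nlinarith only [hl4, hV1]
    · rw [hVp, hldef]; nlinarith only [hl4, hV2]

lemma deriv_Vf {ν k₁ k₂ ε : ℝ} (hν : 1/2 < ν) (hν1 : ν < 1)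
    {x : ℝ → ℝ × ℝ} {s t : ℝ}
    (hx : HasDerivWithinAt x
      ((x t).2, -k₁ * spow (x t).1 (2*ν-1) - k₂ * spow (x t).2 ((2*ν-1)/ν)) (Ici s) t) :
    HasDerivWithinAt (fun τ => Vf ν k₁ ε (x τ)) (Pf ν k₁ k₂ ε (x t)) (Ici s) t := by
  have hν0 : (0:ℝ) < ν := by linarith
  set X1 : ℝ := (x t).1 with hX1
  set X2 : ℝ := (x t).2 with hX2
  set U : ℝ := -k₁ * spow X1 (2*ν-1) - k₂ * spow X2 ((2*ν-1)/ν) with hU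
  have hx1 : HasDerivWithinAt (fun τ => (x τ).1) X2 (Ici s) t := by
    have := ((ContinuousLinearMap.fst ℝ ℝ ℝ).hasFDerivAt).comp_hasDerivWithinAt t hx
    simpa [Function.comp_def] using this
  have hx2 : HasDerivWithinAt (fun τ => (x τ).2) U (Ici s) t := by
    have := ((ContinuousLinearMap.snd ℝ ℝ ℝ).hasFDerivAt).comp_hasDerivWithinAt t hx
    simpa [Function.comp_def] using this
  have habs : HasDerivWithinAt (fun τ => |(x τ).1| ^ (2*ν))
      ((2*ν) * spow X1 (2*ν-1) * X2) (Ici s) t := by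
    have h1 := (hasDerivAt_abs_rpow' (by linarith : 1 < 2*ν) X1).comp_hasDerivWithinAt t hx1
    exact h1
  have hspw : HasDerivWithinAt (fun τ => spow (x τ).1 (3*ν))
      ((3*ν) * |X1| ^ (3*ν-1) * X2) (Ici s) t := by
    have h1 := (hasDerivAt_spow (by linarith : 1 < 3*ν) X1).comp_hasDerivWithinAt t hx1
    exact h1
  have hV0' : HasDerivWithinAt (fun τ => V0 ν k₁ (x τ))
      (k₁/(2*ν) * ((2*ν) * spow X1 (2*ν-1) * X2) + (U * X2 + X2 * U)/2) (Ici s) t := by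
    have h1 := habs.const_mul (k₁/(2*ν))
    have h2 := (hx2.mul hx2).div_const 2
    have h3 := h1.add h2
    rw [show (fun τ => V0 ν k₁ (x τ)) = fun τ => k₁/(2*ν) * |(x τ).1| ^ (2*ν) + (x τ).2 * (x τ).2 / 2
      from funext fun τ => by rw [V0]; ring]
    exact h3
  have hVsq : HasDerivWithinAt (fun τ => (V0 ν k₁ (x τ))^2)
      (2 * V0 ν k₁ (x t) * (k₁/(2*ν) * ((2*ν) * spow X1 (2*ν-1) * X2) + (U * X2 + X2 * U)/2))
      (Ici s) t := by
    have := hV0'.pow 2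
    exact this.congr_deriv (by norm_num)
  have hcross : HasDerivWithinAt (fun τ => ε * spow (x τ).1 (3*ν) * (x τ).2)
      (ε * ((3*ν) * |X1| ^ (3*ν-1) * X2 * X2 + spow X1 (3*ν) * U)) (Ici s) t := by
    have h1 := (hspw.mul hx2).const_mul ε
    rw [show (fun τ => ε * spow (x τ).1 (3*ν) * (x τ).2) = fun τ => ε * (spow (x τ).1 (3*ν) * (x τ).2)
      from funext fun τ => by ring]
    exact h1
  have htot := hVsq.add hcross
  have hfun : (fun τ => (V0 ν k₁ (x τ))^2 + ε * spow (x τ).1 (3*ν) * (x τ).2)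
      = fun τ => Vf ν k₁ ε (x τ) := by
    funext τ; rw [Vf]
  rw [show ((fun τ => V0 ν k₁ (x τ) ^ 2) + fun τ => ε * spow (x τ).1 (3 * ν) * (x τ).2)
      = fun τ => Vf ν k₁ ε (x τ) from hfun] at htot
  refine htot.congr_deriv (Eq.symm ?_)
  have id1 : X2 * spow X2 ((2*ν-1)/ν) = |X2| ^ (1 + (2*ν-1)/ν) :=
    mul_spow_self _ (by apply div_pos <;> linarith)
  have id2 : spow X1 (3*ν) * spow X1 (2*ν-1) = |X1| ^ (3*ν + (2*ν-1)) :=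
    spow_mul_spow _ _ (by linarith) (by linarith)
  rw [show 3*ν + (2*ν-1) = 5*ν-1 by ring] at id2
  rw [Pf, ← hX1, ← hX2, ← id1, ← id2, hU]
  have hν' : (2:ℝ)*ν ≠ 0 := by positivity
  field_simp
  ring

lemma comparison {g g' : ℝ → ℝ} {c γ : ℝ} (hc : 0 < c) (hγ0 : 0 < γ) (hγ1 : γ < 1)
    (hg : ∀ t ∈ Ici (0:ℝ), HasDerivWithinAt g (g' t) (Ici 0) t)
    (hnn : ∀ t ∈ Ici (0:ℝ), 0 ≤ g t)
    (hineq : ∀ t ∈ Ici (0:ℝ), g' t ≤ -c * (g t) ^ γ) :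
    (∀ t ∈ Ici (0:ℝ), g t ≤ g 0) ∧
      (∀ t, (g 0) ^ (1-γ) / (c*(1-γ)) ≤ t → g t = 0) := by
  have hA : AntitoneOn g (Ici 0) := by
    apply antitoneOn_of_hasDerivWithinAt_nonpos (convex_Ici 0)
      (fun t ht => (hg t ht).continuousWithinAt) (f' := g')
    · intro t ht
      rw [interior_Ici] at ht
      exact (hg t (mem_Ici.mpr (le_of_lt (mem_Ioi.mp ht)))).mono interior_subset
    · intro t ht
      rw [interior_Ici] at ht
      have h1 := hineq t (mem_Ici.mpr (le_of_lt (mem_Ioi.mp ht)))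
      have h2 : 0 ≤ (g t) ^ γ := Real.rpow_nonneg (hnn t (mem_Ici.mpr (le_of_lt (mem_Ioi.mp ht)))) _
      nlinarith only [h1, h2, hc]
  constructor
  · exact fun t ht => hA (self_mem_Ici) ht ht
  · set T0 : ℝ := (g 0) ^ (1-γ) / (c*(1-γ)) with hT0def
    have hc1γ : 0 < c*(1-γ) := by nlinarith only [hc, hγ1]
    have hT0 : 0 ≤ T0 := div_nonneg (Real.rpow_nonneg (hnn 0 self_mem_Ici) _) hc1γ.le
    have hz : g T0 = 0 := by
      by_contra hgT
      have hgTpos : 0 < g T0 := lt_of_le_of_ne (hnn T0 hT0) (Ne.symm hgT)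
      have hpos : ∀ t ∈ Icc (0:ℝ) T0, 0 < g t := by
        intro t ht
        have := hA (by exact ht.1) hT0 ht.2
        linarith
      set w : ℝ → ℝ := fun t => (g t) ^ (1-γ) + c*(1-γ)*t with hwdef
      have hwA : AntitoneOn w (Icc 0 T0) := by
        apply antitoneOn_of_hasDerivWithinAt_nonpos (convex_Icc 0 T0)
          (f' := fun t => (1-γ) * (g t) ^ (-γ:ℝ) * g' t + c*(1-γ))
        · -- continuity
          intro t ht
          apply ContinuousWithinAt.add
          · apply ContinuousWithinAt.rpow_const
            · exact ((hg t ht.1).continuousWithinAt).mono Icc_subset_Ici_self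
            · exact Or.inr (by linarith)
          · exact ((continuous_const.mul continuous_id).continuousWithinAt)
        · intro t ht
          rw [interior_Icc] at ht
          have hgd : HasDerivWithinAt g (g' t) (Icc 0 T0) t :=
            (hg t ht.1.le).mono Icc_subset_Ici_self
          have hrp : HasDerivAt (fun z : ℝ => z ^ (1-γ)) ((1-γ) * (g t) ^ (1-γ-1)) (g t) :=
            Real.hasDerivAt_rpow_const (Or.inl (hpos t (mem_Icc_of_Ioo ht)).ne')
          have hcomp := hrp.comp_hasDerivWithinAt t hgd
          have hlin : HasDerivWithinAt (fun τ : ℝ => c*(1-γ)*τ) (c*(1-γ)) (Icc 0 T0) t := by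
            simpa using ((hasDerivAt_id t).const_mul (c*(1-γ))).hasDerivWithinAt
          have := hcomp.add hlin
          have hexp : (1:ℝ)-γ-1 = -γ := by ring
          rw [hexp] at this
          exact this.mono interior_subset
        · intro t ht
          rw [interior_Icc] at ht
          have hgt := hpos t (mem_Icc_of_Ioo ht)
          have h1 := hineq t ht.1.le
          have h2 : 0 < (g t) ^ (-γ:ℝ) := Real.rpow_pos_of_pos hgt _
          have h3 : (g t) ^ (-γ:ℝ) * (g t) ^ (γ:ℝ) = 1 := by
            rw [← Real.rpow_add hgt]; simp
          have h4 : (1-γ) * (g t) ^ (-γ:ℝ) * g' t ≤ -(c*(1-γ)) := by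
            have h5 : (1-γ) * (g t) ^ (-γ:ℝ) * g' t
                ≤ (1-γ) * (g t) ^ (-γ:ℝ) * (-c * (g t) ^ γ) := by
              apply mul_le_mul_of_nonneg_left h1
              exact mul_nonneg (by linarith) h2.le
            have h6 : (1-γ) * (g t) ^ (-γ:ℝ) * (-c * (g t) ^ γ) = -(c*(1-γ)) := by
              calc (1-γ) * (g t) ^ (-γ:ℝ) * (-c * (g t) ^ γ)
                  = -(c*(1-γ)) * ((g t) ^ (-γ:ℝ) * (g t) ^ (γ:ℝ)) := by ring
                _ = -(c*(1-γ)) := by rw [h3, mul_one]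
            linarith only [h5, h6.le, h6.symm.le]
          linarith only [h4]
      have hends := hwA (left_mem_Icc.mpr hT0) (right_mem_Icc.mpr hT0) hT0
      have hval : c*(1-γ)*T0 = (g 0) ^ (1-γ) := by
        rw [hT0def]; field_simp [show (1:ℝ)-γ ≠ 0 by linarith]
      have hwT0 : (g T0) ^ (1-γ) + c*(1-γ)*T0 ≤ (g 0) ^ (1-γ) + c*(1-γ)*0 := hends
      have hgTp : 0 < (g T0) ^ (1-γ) := Real.rpow_pos_of_pos hgTpos _
      rw [hval] at hwT0
      nlinarith only [hwT0, hgTp]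
    intro t ht
    have ht0 : (0:ℝ) ≤ t := le_trans hT0 ht
    have h1 := hA hT0 ht0 ht
    have h2 := hnn t ht0
    rw [hz] at h1
    linarith only [h1, h2]

set_option maxHeartbeats 1000000 in
lemma main_nu {ν k₁ k₂ : ℝ} (hν : 1/2 < ν) (hν1 : ν < 1) (hk₁ : 0 < k₁) (hk₂ : 0 < k₂) :
    SmallTimeStable (fun p : ℝ × ℝ =>
      (p.2, -k₁ * spow p.1 (2*ν-1) - k₂ * spow p.2 ((2*ν-1)/ν))) := by
  have hν0 : (0:ℝ) < ν := by linarith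
  obtain ⟨ε, hε, c₃, hc₃, c₁, hc₁, C, hC, hglob⟩ := global_bound hν hν1 hk₁ hk₂
  set γ : ℝ := (5*ν-1)/(4*ν) with hγdef
  have hγ0 : 0 < γ := by apply div_pos <;> linarith
  have hγ1 : γ < 1 := by rw [hγdef, div_lt_one (by linarith)]; linarith
  have h1γ : 0 < 1 - γ := by linarith
  intro ε₀ hε₀
  set m : ℝ := min 1 ε₀ with hmdef
  have hm : 0 < m := lt_min one_pos hε₀
  have hm1 : m ≤ 1 := min_le_left _ _
  have hmε : m ≤ ε₀ := min_le_right _ _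
  set V1 : ℝ := (ε₀*(c₃*(1-γ))) ^ (1/(1-γ) : ℝ) with hV1def
  have hV1 : 0 < V1 := Real.rpow_pos_of_pos (by positivity) _
  set Vs : ℝ := min V1 (c₁ * m^4/2) with hVsdef
  have hVs : 0 < Vs := lt_min hV1 (by positivity)
  set ss : ℝ := (Vs/C) ^ (1/(2*ν) : ℝ) with hssdef
  have hss : 0 < ss := Real.rpow_pos_of_pos (by positivity) _
  set η : ℝ := min 1 (Real.sqrt (ss/2)) with hηdef
  have hη : 0 < η := lt_min one_pos (Real.sqrt_pos.mpr (by positivity))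
  have hη1 : η ≤ 1 := min_le_left _ _
  have hη2 : η^2 ≤ ss/2 := by
    have h1 : η ≤ Real.sqrt (ss/2) := min_le_right _ _
    nlinarith only [h1, Real.sq_sqrt (by positivity : (0:ℝ) ≤ ss/2), hη,
      Real.sqrt_nonneg (ss/2)]
  refine ⟨η, hη, fun x hsol hx0 => ?_⟩
  -- derivative facts
  have hg : ∀ t ∈ Ici (0:ℝ), HasDerivWithinAt (fun τ => Vf ν k₁ ε (x τ))
      (Pf ν k₁ k₂ ε (x t)) (Ici 0) t := fun t ht => deriv_Vf hν hν1 (hsol t ht)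
  have hnn : ∀ t ∈ Ici (0:ℝ), 0 ≤ Vf ν k₁ ε (x t) := fun t _ => (hglob (x t)).1
  have hineq : ∀ t ∈ Ici (0:ℝ), Pf ν k₁ k₂ ε (x t) ≤ -c₃ * (Vf ν k₁ ε (x t)) ^ γ :=
    fun t _ => (hglob (x t)).2.1
  obtain ⟨hmono, hzero⟩ := comparison hc₃ hγ0 hγ1 hg hnn hineq
  -- initial value bound
  have hVx0 : Vf ν k₁ ε (x 0) ≤ Vs := by
    have h1 : |(x 0).1| ≤ η := le_trans (le_trans (norm_fst_le (x 0)) hx0.le) le_rfl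
    have h2 : |(x 0).2| ≤ η := le_trans (le_trans (norm_snd_le (x 0)) hx0.le) le_rfl
    have h3 : (x 0).1^2 + |(x 0).2| ^ (2/ν) ≤ ss := by
      have g1 : (x 0).1^2 ≤ η^2 := by nlinarith only [h1, abs_nonneg (x 0).1, sq_abs (x 0).1]
      have g2 : |(x 0).2| ^ ((2:ℝ)/ν) ≤ η ^ ((2:ℝ)/ν) :=
        Real.rpow_le_rpow (abs_nonneg _) h2 (by positivity)
      have g3 : η ^ ((2:ℝ)/ν) ≤ η ^ ((2:ℝ)) :=
        rpow_le_rpow_exp hη.le hη1 two_pos (by rw [le_div_iff₀ hν0]; nlinarith only [hν1, hν0])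
      have g4 : η ^ ((2:ℝ)) = η^2 := by
        rw [show ((2:ℝ)) = ((2:ℕ):ℝ) by norm_num, Real.rpow_natCast]
      calc (x 0).1^2 + |(x 0).2| ^ (2/ν) ≤ η^2 + η ^ ((2:ℝ)/ν) := add_le_add g1 g2
        _ ≤ η^2 + η^2 := add_le_add le_rfl (g3.trans g4.le)
        _ = 2*η^2 := by ring
        _ ≤ ss := by linarith only [hη2]
    have h4 : rho ν (x 0) ^ ((4:ℝ)*ν) ≤ Vs / C := by
      have g1 : rho ν (x 0) ≤ Real.sqrt ss := by
        rw [rho]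
        exact Real.sqrt_le_sqrt h3
      have g2 : rho ν (x 0) ^ ((4:ℝ)*ν) ≤ (Real.sqrt ss) ^ ((4:ℝ)*ν) :=
        Real.rpow_le_rpow (rho_nonneg ν (x 0)) g1 (by positivity)
      have g3 : (Real.sqrt ss) ^ ((4:ℝ)*ν) = ss ^ (2*ν : ℝ) := by
        rw [Real.sqrt_eq_rpow, ← Real.rpow_mul hss.le]
        norm_num
        rw [show (1:ℝ)/2 * (4*ν) = 2*ν by ring]
      have g4 : ss ^ (2*ν : ℝ) = Vs / C := by
        rw [hssdef, ← Real.rpow_mul (by positivity), one_div_mul_cancel (by positivity), Real.rpow_one]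
      rw [g3, g4] at g2
      exact g2
    have h5 := (hglob (x 0)).2.2.2
    calc Vf ν k₁ ε (x 0) ≤ C * rho ν (x 0) ^ (4*ν) := h5
      _ ≤ C * (Vs / C) := by
          apply mul_le_mul_of_nonneg_left _ hC.le
          exact h4
      _ = Vs := by field_simp
  have hg0nn : 0 ≤ Vf ν k₁ ε (x 0) := (hglob (x 0)).1
  -- settling time
  have hT0 : Vf ν k₁ ε (x 0) ^ (1-γ) / (c₃*(1-γ)) ≤ ε₀ := by
    have h1 : Vf ν k₁ ε (x 0) ^ (1-γ) ≤ V1 ^ (1-γ) :=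
      Real.rpow_le_rpow hg0nn (le_trans hVx0 (min_le_left _ _)) h1γ.le
    have h2 : V1 ^ ((1:ℝ)-γ) = ε₀*(c₃*(1-γ)) := by
      rw [hV1def, ← Real.rpow_mul (by positivity), one_div_mul_cancel h1γ.ne', Real.rpow_one]
    rw [div_le_iff₀ (by positivity)]
    calc Vf ν k₁ ε (x 0) ^ (1-γ) ≤ V1 ^ (1-γ) := h1
      _ = ε₀*(c₃*(1-γ)) := h2
      _ = ε₀ * (c₃*(1-γ)) := by ring
  constructor
  · -- x ε₀ = 0
    have hz : Vf ν k₁ ε (x ε₀) = 0 := hzero ε₀ hT0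
    by_contra hne
    have hrp : 0 < rho ν (x ε₀) := rho_pos hν0 hne
    have h1 := (hglob (x ε₀)).2.2.1
    have h2 : 0 < c₁ * rho ν (x ε₀) ^ (4*ν) :=
      mul_pos hc₁ (Real.rpow_pos_of_pos hrp _)
    rw [hz] at h1
    linarith only [h1, h2]
  · -- norm bound
    intro t ht
    have hVt : Vf ν k₁ ε (x t) ≤ Vs := le_trans (hmono t ht) hVx0
    have hrt : c₁ * rho ν (x t) ^ (4*ν) ≤ Vs := le_trans (hglob (x t)).2.2.1 hVt
    have hr4 : rho ν (x t) ^ ((4:ℝ)*ν) ≤ m^4/2 := by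
      have h1 : Vs ≤ c₁ * m^4/2 := min_le_right _ _
      have h2 : c₁ * rho ν (x t) ^ (4*ν) ≤ c₁ * (m^4/2) := by
        calc c₁ * rho ν (x t) ^ (4*ν) ≤ c₁ * m^4/2 := le_trans hrt h1
          _ = c₁ * (m^4/2) := by ring
      nlinarith only [h2, hc₁]
    have hrnn := rho_nonneg ν (x t)
    have hm4 : m^4 = m ^ ((4:ℝ)) := by
      rw [show ((4:ℝ)) = ((4:ℕ):ℝ) by norm_num, Real.rpow_natCast]
    have hrm : rho ν (x t) < m := by
      by_contra hcon
      push_neg at hcon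
      have : m ^ ((4:ℝ)*ν) ≤ rho ν (x t) ^ ((4:ℝ)*ν) :=
        Real.rpow_le_rpow hm.le hcon (by positivity)
      have hm4ν : m ^ ((4:ℝ)) ≤ m ^ ((4:ℝ)*ν) :=
        rpow_le_rpow_exp hm.le hm1 (by positivity) (by nlinarith only [hν1, hν0])
      have q1 : m ^ ((4:ℝ)) ≤ m^4/2 := le_trans hm4ν (le_trans this hr4)
      have q2 : (0:ℝ) < m ^ ((4:ℝ)) := Real.rpow_pos_of_pos hm _
      rw [← hm4] at q1 q2
      linarith only [q1, q2]
    have hrν : rho ν (x t) ^ (ν:ℝ) < m := by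
      by_contra hcon
      push_neg at hcon
      have h1 : m ^ ((4:ℝ)) ≤ (rho ν (x t) ^ (ν:ℝ)) ^ ((4:ℝ)) :=
        Real.rpow_le_rpow hm.le hcon (by norm_num)
      have h2 : (rho ν (x t) ^ (ν:ℝ)) ^ ((4:ℝ)) = rho ν (x t) ^ ((4:ℝ)*ν) := by
        rw [← Real.rpow_mul hrnn]
        rw [show ν * 4 = 4*ν by ring]
      have q1 : m ^ ((4:ℝ)) ≤ m^4/2 := by rw [← h2] at hr4; exact le_trans h1 hr4
      have q2 : (0:ℝ) < m ^ ((4:ℝ)) := Real.rpow_pos_of_pos hm _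
      rw [← hm4] at q1 q2
      linarith only [q1, q2]
    -- component bounds
    have hsq : rho ν (x t) ^ 2 = (x t).1^2 + |(x t).2| ^ (2/ν) := by
      rw [rho]
      exact Real.sq_sqrt (by positivity)
    have hx1 : |(x t).1| ≤ rho ν (x t) := by
      have h1 : (x t).1^2 ≤ rho ν (x t)^2 := by
        rw [hsq]; nlinarith only [Real.rpow_nonneg (abs_nonneg (x t).2) (2/ν)]
      nlinarith only [h1, hrnn, abs_nonneg (x t).1, sq_abs (x t).1]
    have hx2 : |(x t).2| ≤ rho ν (x t) ^ (ν:ℝ) := by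
      have h1 : |(x t).2| ^ ((2:ℝ)/ν) ≤ rho ν (x t)^2 := by
        rw [hsq]; nlinarith only [sq_nonneg (x t).1]
      have h2 : (|(x t).2| ^ ((2:ℝ)/ν)) ^ (ν/2 : ℝ) ≤ (rho ν (x t)^2) ^ (ν/2 : ℝ) :=
        Real.rpow_le_rpow (Real.rpow_nonneg (abs_nonneg _) _) h1 (by positivity)
      have h3 : (|(x t).2| ^ ((2:ℝ)/ν)) ^ (ν/2 : ℝ) = |(x t).2| := by
        rw [← Real.rpow_mul (abs_nonneg _), show (2/ν) * (ν/2) = 1 by field_simp,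
          Real.rpow_one]
      have h4 : ((rho ν (x t))^2) ^ (ν/2 : ℝ) = rho ν (x t) ^ (ν:ℝ) := by
        rw [show (rho ν (x t))^2 = rho ν (x t) ^ ((2:ℕ):ℝ) by rw [Real.rpow_natCast],
          ← Real.rpow_mul hrnn]
        norm_num
        rw [show (2:ℝ) * (ν/2) = ν by ring]
      rw [h3, h4] at h2
      exact h2
    have hnorm : ‖x t‖ = max |(x t).1| |(x t).2| := by
      rw [Prod.norm_def, Real.norm_eq_abs, Real.norm_eq_abs]
    rw [hnorm]
    apply max_lt
    · calc |(x t).1| ≤ rho ν (x t) := hx1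
        _ < m := hrm
        _ ≤ ε₀ := hmε
    · calc |(x t).2| ≤ rho ν (x t) ^ (ν:ℝ) := hx2
        _ < m := hrν
        _ ≤ ε₀ := hmε


/-- Small-time stabilization of the double integrator by
`u = -k₁⌊x₁⌉^{1+2κ} - k₂⌊x₂⌉^{(1+2κ)/(1+κ)}`. -/
theorem stmt6 (κ k₁ k₂ : ℝ) (hκ₁ : -(1/2) < κ) (hκ₂ : κ < 0)
    (hk₁ : 0 < k₁) (hk₂ : 0 < k₂) :
    SmallTimeStable (fun p : ℝ × ℝ =>
      (p.2, -k₁ * spow p.1 (1 + 2*κ) - k₂ * spow p.2 ((1 + 2*κ) / (1 + κ)))) := by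
  have h1 : (1:ℝ) + 2*κ = 2*(1+κ)-1 := by ring
  have hfeq : (fun p : ℝ × ℝ =>
      (p.2, -k₁ * spow p.1 (1 + 2*κ) - k₂ * spow p.2 ((1 + 2*κ) / (1 + κ))))
      = (fun p : ℝ × ℝ =>
      (p.2, -k₁ * spow p.1 (2*(1+κ)-1) - k₂ * spow p.2 ((2*(1+κ)-1) / (1+κ)))) := by
    funext p; rw [h1]
  rw [hfeq]
  exact main_nu (by linarith) (by linarith) hk₁ hk₂
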